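/- arXiv:1109.0602 — 3 statements merged into one kernel-verified Lean document; each statement's English description precedes it below -/
import Mathlib

section
/- Let d_S ≥ 2, let ρ_{SE} be a density matrix on ℂ^{d_S} ⊗ ℂ^{d_E} with reduced state ρ_S = Tr_E ρ_{SE}, and set χ = ‖ρ_S − I_S/d_S‖₁. If χ ≤ 1/d_S, then for every Hermitian matrix H on ℂ^{d_S} ⊗ ℂ^{d_E} the purity rate is bounded by |Tr(H·[ρ_S ⊗ I_E, ρ_{SE}])| ≤ ‖H‖_∞·χ. -/
open scoped Kronecker ComplexOrder
open Matrix MeasureTheory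

noncomputable section

/-- The trace norm `‖A‖₁ = Tr √(AᴴA)`. -/
def traceNorm {n : Type*} [Fintype n] [DecidableEq n] (A : Matrix n n ℂ) : ℝ :=
  (((Matrix.posSemidef_conjTranspose_mul_self A).1.eigenvectorUnitary.1 *
    diagonal (((↑) : ℝ → ℂ) ∘ (√·) ∘ (Matrix.posSemidef_conjTranspose_mul_self A).1.eigenvalues) *
    (star (Matrix.posSemidef_conjTranspose_mul_self A).1.eigenvectorUnitary : Matrix n n ℂ)).trace).re

/-- The operator (spectral) norm `‖A‖_∞`. -/
def opNorm {n : Type*} [Fintype n] [DecidableEq n] (A : Matrix n n ℂ) : ℝ :=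
  ‖Matrix.toEuclideanCLM (𝕜 := ℂ) A‖

/-- The partial trace over the second tensor factor. -/
def ptrace2 {m e : Type*} [Fintype e] (ρ : Matrix (m × e) (m × e) ℂ) : Matrix m m ℂ :=
  Matrix.of fun i j => ∑ k, ρ (i, k) (j, k)

/-- The binary logarithm `log₂` of a Hermitian matrix, via the spectral functional
calculus (junk value `0` on non-Hermitian input). -/
def matLog2 {n : Type*} [Fintype n] [DecidableEq n] (A : Matrix n n ℂ) : Matrix n n ℂ :=
  if hA : A.IsHermitian then hA.cfc (Real.logb 2) else 0

/-- The commutator `[A, B] = A·B − B·A`. -/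
def mcomm {n : Type*} [Fintype n] (A B : Matrix n n ℂ) : Matrix n n ℂ :=
  A * B - B * A

namespace PurityAux

variable {n : Type*} [Fintype n] [DecidableEq n]

lemma opNorm_nonneg (A : Matrix n n ℂ) : 0 ≤ opNorm A := norm_nonneg _

lemma opNorm_mul_le (A B : Matrix n n ℂ) : opNorm (A * B) ≤ opNorm A * opNorm B := by
  rw [opNorm, _root_.map_mul]; exact norm_mul_le _ _

lemma opNorm_sub_le (A B : Matrix n n ℂ) : opNorm (A - B) ≤ opNorm A + opNorm B := by
  rw [opNorm, map_sub]; exact norm_sub_le _ _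

lemma norm_clm_apply (A : Matrix n n ℂ) (v : n → ℂ) :
    ‖toEuclideanCLM (𝕜 := ℂ) A ((WithLp.equiv 2 (n → ℂ)).symm v)‖
      = Real.sqrt (∑ i, ‖(A *ᵥ v) i‖ ^ 2) := by
  rw [WithLp.equiv_symm_apply, toEuclideanCLM_toLp, EuclideanSpace.norm_eq]

lemma norm_euc (x : EuclideanSpace ℂ n) :
    ‖x‖ = Real.sqrt (∑ i, ‖WithLp.equiv 2 (n → ℂ) x i‖ ^ 2) := by
  rw [EuclideanSpace.norm_eq]; rfl

lemma opNorm_diagonal_le (d : n → ℂ) (c : ℝ) (hc : 0 ≤ c) (h : ∀ i, ‖d i‖ ≤ c) :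
    opNorm (diagonal d) ≤ c := by
  refine ContinuousLinearMap.opNorm_le_bound _ hc fun x => ?_
  set v := WithLp.equiv 2 (n → ℂ) x with hv
  have hx : x = (WithLp.equiv 2 (n → ℂ)).symm v := rfl
  rw [hx, norm_clm_apply]
  rw [norm_euc]
  simp only [Equiv.apply_symm_apply]
  rw [← Real.sqrt_sq hc, ← Real.sqrt_mul (by positivity)]
  apply Real.sqrt_le_sqrt
  rw [Finset.mul_sum]
  refine Finset.sum_le_sum fun i _ => ?_
  rw [mulVec_diagonal]
  rw [norm_mul, mul_pow]
  have := h i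
  have : ‖d i‖ ^ 2 ≤ c ^ 2 := by nlinarith [norm_nonneg (d i)]
  nlinarith [norm_nonneg (v i), sq_nonneg ‖v i‖]

lemma opNorm_kron_one_le {m e : Type*} [Fintype m] [DecidableEq m] [Fintype e] [DecidableEq e]
    (A : Matrix m m ℂ) : opNorm (A ⊗ₖ (1 : Matrix e e ℂ)) ≤ opNorm A := by
  refine ContinuousLinearMap.opNorm_le_bound _ (norm_nonneg _) fun x => ?_
  set v := WithLp.equiv 2 (m × e → ℂ) x with hv
  have hx : x = (WithLp.equiv 2 (m × e → ℂ)).symm v := rfl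
  rw [hx, norm_clm_apply, norm_euc]
  simp only [Equiv.apply_symm_apply]
  rw [← Real.sqrt_sq (mul_nonneg (opNorm_nonneg A) (Real.sqrt_nonneg _)),
    mul_pow, Real.sq_sqrt (by positivity)]
  apply Real.sqrt_le_sqrt
  have hmv : ∀ p : m × e, ((A ⊗ₖ (1 : Matrix e e ℂ)) *ᵥ v) p
      = (A *ᵥ fun j => v (j, p.2)) p.1 := by
    rintro ⟨i, k⟩
    simp only [mulVec, dotProduct, kroneckerMap_apply, Fintype.sum_prod_type]
    refine Finset.sum_congr rfl fun j _ => ?_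
    simp [one_apply, Finset.sum_ite_eq', mul_comm]
  calc ∑ p : m × e, ‖((A ⊗ₖ (1 : Matrix e e ℂ)) *ᵥ v) p‖ ^ 2
      = ∑ k : e, ∑ i : m, ‖(A *ᵥ fun j => v (j, k)) i‖ ^ 2 := by
        rw [Fintype.sum_prod_type, Finset.sum_comm]
        exact Finset.sum_congr rfl fun k _ => Finset.sum_congr rfl fun i _ => by rw [hmv]
    _ ≤ ∑ k : e, opNorm A ^ 2 * ∑ j : m, ‖v (j, k)‖ ^ 2 := by
        refine Finset.sum_le_sum fun k _ => ?_
        have h1 : Real.sqrt (∑ i, ‖(A *ᵥ fun j => v (j, k)) i‖ ^ 2)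
            ≤ opNorm A * Real.sqrt (∑ j, ‖v (j, k)‖ ^ 2) := by
          rw [← norm_clm_apply]
          calc ‖toEuclideanCLM (𝕜 := ℂ) A ((WithLp.equiv 2 (m → ℂ)).symm fun j => v (j, k))‖
              ≤ opNorm A * ‖(WithLp.equiv 2 (m → ℂ)).symm fun j => v (j, k)‖ :=
                (toEuclideanCLM (𝕜 := ℂ) A).le_opNorm _
            _ = opNorm A * Real.sqrt (∑ j, ‖v (j, k)‖ ^ 2) := by
                rw [norm_euc]
                simp
        have h2 := mul_self_le_mul_self (Real.sqrt_nonneg _) h1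
        rw [Real.mul_self_sqrt (by positivity)] at h2
        calc ∑ i : m, ‖(A *ᵥ fun j => v (j, k)) i‖ ^ 2
            ≤ (opNorm A * Real.sqrt (∑ j, ‖v (j, k)‖ ^ 2)) *
              (opNorm A * Real.sqrt (∑ j, ‖v (j, k)‖ ^ 2)) := h2
          _ = opNorm A ^ 2 * ∑ j, ‖v (j, k)‖ ^ 2 := by
              rw [mul_mul_mul_comm, Real.mul_self_sqrt (by positivity)]; ring
    _ = opNorm A ^ 2 * ∑ p : m × e, ‖v p‖ ^ 2 := by
        rw [← Finset.mul_sum, Fintype.sum_prod_type, Finset.sum_comm]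

open scoped MatrixOrder in
lemma abs_trace_mul_le (M ρ : Matrix n n ℂ) (hρ : ρ.PosSemidef) :
    ‖(M * ρ).trace‖ ≤ opNorm M * ρ.trace.re := by
  classical
  set S := CFC.sqrt ρ with hS
  have hSh : S.IsHermitian := (CFC.sqrt_nonneg ρ).posSemidef.1
  have hρeq : ρ = S * S := (CFC.sqrt_mul_sqrt_self ρ hρ.nonneg).symm
  set c : n → EuclideanSpace ℂ n := fun i => (WithLp.equiv 2 (n → ℂ)).symm (fun j => S j i) with hc
  have key : (M * ρ).trace = ∑ i, inner ℂ (c i) (toEuclideanCLM (𝕜 := ℂ) M (c i)) := by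
    rw [hρeq, ← mul_assoc, trace_mul_comm, trace]
    congr 1
    ext i
    have hφ : toEuclideanCLM (𝕜 := ℂ) M (c i) =
        (WithLp.equiv 2 (n → ℂ)).symm (M *ᵥ fun j => S j i) := by
      rw [hc]; exact toEuclideanCLM_toLp M _
    rw [hφ, hc]
    simp only [PiLp.inner_apply, WithLp.equiv_symm_apply, PiLp.toLp_apply, diag_apply, mul_apply, mulVec,
      dotProduct, RCLike.inner_apply, Finset.mul_sum, Finset.sum_mul]
    refine Finset.sum_congr rfl fun j _ => ?_
    refine Finset.sum_congr rfl fun k _ => ?_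
    have : (starRingEnd ℂ) (S j i) = S i j := by
      conv_rhs => rw [← hSh]
      simp [conjTranspose_apply]
    rw [this]; ring
  have hnorm2 : ∀ i, ‖c i‖ ^ 2 = ∑ j, ‖S j i‖ ^ 2 := by
    intro i
    rw [hc]
    rw [EuclideanSpace.norm_eq, Real.sq_sqrt (by positivity)]
    simp
  have htr2 : ρ.trace.re = ∑ i, ∑ j, ‖S j i‖ ^ 2 := by
    rw [hρeq, trace]
    rw [Complex.re_sum]
    refine Finset.sum_congr rfl fun i _ => ?_
    simp only [diag_apply, mul_apply]
    rw [Complex.re_sum]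
    refine Finset.sum_congr rfl fun j _ => ?_
    have : S i j = (starRingEnd ℂ) (S j i) := by
      conv_lhs => rw [← hSh]; simp [conjTranspose_apply]
    rw [this]
    rw [← Complex.normSq_eq_conj_mul_self, Complex.ofReal_re, Complex.normSq_eq_norm_sq]
  rw [key, htr2]
  calc ‖(∑ i, inner ℂ (c i) (toEuclideanCLM (𝕜 := ℂ) M (c i)) : ℂ)‖
      ≤ ∑ i, ‖(inner ℂ (c i) (toEuclideanCLM (𝕜 := ℂ) M (c i)) : ℂ)‖ := by
        simpa using (norm_sum_le Finset.univ fun i => (inner ℂ (c i) (toEuclideanCLM (𝕜 := ℂ) M (c i)) : ℂ))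
    _ ≤ ∑ i, opNorm M * ‖c i‖ ^ 2 := by
        refine Finset.sum_le_sum fun i _ => ?_
        calc ‖(inner ℂ (c i) (toEuclideanCLM (𝕜 := ℂ) M (c i)) : ℂ)‖
            ≤ ‖c i‖ * ‖toEuclideanCLM (𝕜 := ℂ) M (c i)‖ := norm_inner_le_norm _ _
          _ ≤ ‖c i‖ * (opNorm M * ‖c i‖) := by
              refine mul_le_mul_of_nonneg_left ?_ (norm_nonneg _)
              exact (toEuclideanCLM (𝕜 := ℂ) M).le_opNorm _
          _ = opNorm M * ‖c i‖ ^ 2 := by ring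
    _ = opNorm M * ∑ i, ∑ j, ‖S j i‖ ^ 2 := by
        rw [Finset.mul_sum]
        exact Finset.sum_congr rfl fun i _ => by rw [hnorm2]

lemma trace_conj_unitary (U D : Matrix n n ℂ) (hU : U ∈ Matrix.unitaryGroup n ℂ) :
    (U * D * star U).trace = D.trace := by
  rw [trace_mul_cycle, mem_unitaryGroup_iff'.mp hU, one_mul]

lemma conj_unitary_mul (U : Matrix n n ℂ) (hU : U ∈ Matrix.unitaryGroup n ℂ)
    (X Y : Matrix n n ℂ) :
    (U * X * star U) * (U * Y * star U) = U * (X * Y) * star U := by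
  have h1 : star U * U = 1 := mem_unitaryGroup_iff'.mp hU
  simp only [mul_assoc]
  rw [← mul_assoc (star U) U, h1, one_mul]

lemma trace_hermitian (A : Matrix n n ℂ) (hA : A.IsHermitian) :
    A.trace = ∑ i, (hA.eigenvalues i : ℂ) := by
  conv_lhs => rw [hA.spectral_theorem, Unitary.conjStarAlgAut_apply]
  rw [trace_conj_unitary _ _ (hA.eigenvectorUnitary).2, trace_diagonal]
  rfl

open scoped MatrixOrder in
lemma sqrt_eq_abs (A : Matrix n n ℂ) (hA : A.IsHermitian) :
    ((Matrix.posSemidef_conjTranspose_mul_self A).1.eigenvectorUnitary.1 *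
    diagonal (((↑) : ℝ → ℂ) ∘ (√·) ∘ (Matrix.posSemidef_conjTranspose_mul_self A).1.eigenvalues) *
    (star (Matrix.posSemidef_conjTranspose_mul_self A).1.eigenvectorUnitary : Matrix n n ℂ)) =
      (hA.eigenvectorUnitary : Matrix n n ℂ) *
        diagonal (RCLike.ofReal ∘ (fun i => |hA.eigenvalues i|)) *
        star (hA.eigenvectorUnitary : Matrix n n ℂ) := by
  have hB := (Matrix.posSemidef_conjTranspose_mul_self A)
  have hL : ((Matrix.posSemidef_conjTranspose_mul_self A).1.eigenvectorUnitary.1 *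
      diagonal (((↑) : ℝ → ℂ) ∘ (√·) ∘ (Matrix.posSemidef_conjTranspose_mul_self A).1.eigenvalues) *
      (star (Matrix.posSemidef_conjTranspose_mul_self A).1.eigenvectorUnitary : Matrix n n ℂ))
      = CFC.sqrt (Aᴴ * A) := by
    rw [CFC.sqrt_eq_cfc, cfc_nnreal_eq_real _ (Aᴴ * A), hB.1.cfc_eq]
    simp only [IsHermitian.cfc, Unitary.conjStarAlgAut_apply]
    congr 3
    funext i
    simp [Real.coe_sqrt, Real.coe_toNNReal', hB.eigenvalues_nonneg i]
  rw [hL]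
  refine CFC.sqrt_unique ?_ (Matrix.nonneg_iff_posSemidef.mpr ?_)
  swap
  · have hd : (diagonal ((RCLike.ofReal : ℝ → ℂ) ∘ (fun i => |hA.eigenvalues i|))).PosSemidef := by
      refine posSemidef_diagonal_iff.mpr fun i => ?_
      simp only [Function.comp_apply]
      exact RCLike.ofReal_nonneg.mpr (abs_nonneg _)
    have := hd.mul_mul_conjTranspose_same (hA.eigenvectorUnitary : Matrix n n ℂ)
    simpa [star_eq_conjTranspose] using this
  · rw [conj_unitary_mul _ (hA.eigenvectorUnitary).2, hA.eq]
    conv_rhs => rw [hA.spectral_theorem, Unitary.conjStarAlgAut_apply]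
    rw [conj_unitary_mul _ (hA.eigenvectorUnitary).2]
    congr 2
    rw [diagonal_mul_diagonal, diagonal_mul_diagonal]
    congr 1
    funext i
    simp only [Function.comp_apply, ← RCLike.ofReal_mul, abs_mul_abs_self]

lemma traceNorm_hermitian (A : Matrix n n ℂ) (hA : A.IsHermitian) :
    traceNorm A = ∑ i, |hA.eigenvalues i| := by
  rw [traceNorm, sqrt_eq_abs A hA, trace_conj_unitary _ _ (hA.eigenvectorUnitary).2,
    trace_diagonal]
  rw [Complex.re_sum]
  simp

lemma opNorm_hermitian_le [Nonempty n] (A : Matrix n n ℂ) (hA : A.IsHermitian) (c : ℝ)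
    (hc : 0 ≤ c) (h : ∀ i, |hA.eigenvalues i| ≤ c) : opNorm A ≤ c := by
  have hdle : opNorm (diagonal ((RCLike.ofReal : ℝ → ℂ) ∘ hA.eigenvalues)) ≤ c := by
    refine opNorm_diagonal_le _ c hc fun i => ?_
    simpa using h i
  have hUm : (hA.eigenvectorUnitary : Matrix n n ℂ) ∈ unitary (Matrix n n ℂ) :=
    (hA.eigenvectorUnitary).2
  calc opNorm A = opNorm ((hA.eigenvectorUnitary : Matrix n n ℂ) *
      diagonal (RCLike.ofReal ∘ hA.eigenvalues) * star (hA.eigenvectorUnitary : Matrix n n ℂ)) := by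
        conv_lhs => rw [hA.spectral_theorem, Unitary.conjStarAlgAut_apply]
    _ = opNorm (diagonal ((RCLike.ofReal : ℝ → ℂ) ∘ hA.eigenvalues)) := by
        rw [opNorm, _root_.map_mul, _root_.map_mul]
        rw [CStarRing.norm_mul_mem_unitary _ (Unitary.map_mem
          (f := (toEuclideanCLM (𝕜 := ℂ) : Matrix n n ℂ ≃⋆ₐ[ℂ] _)) (Unitary.star_mem hUm))]
        rw [CStarRing.norm_mem_unitary_mul _ (Unitary.map_mem
          (f := (toEuclideanCLM (𝕜 := ℂ) : Matrix n n ℂ ≃⋆ₐ[ℂ] _)) hUm)]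
        rfl
    _ ≤ c := hdle

end PurityAux

open PurityAux in
/-- **Lemma 3.** If the reduced state of a density matrix `ρSE` is
`χ`-close in trace norm to the fully mixed state with `χ ≤ 1/d_S` and `d_S ≥ 2`, then the
purity rate is at most `‖H‖_∞·χ` for every interaction Hamiltonian `H`. -/
theorem close_to_mixed_implies_low_purity_rate {dS dE : ℕ} (hdS : 2 ≤ dS)
    (ρSE : Matrix (Fin dS × Fin dE) (Fin dS × Fin dE) ℂ)
    (hρ : ρSE.PosSemidef) (htr : ρSE.trace = 1) (χ : ℝ)
    (hχ : χ = traceNorm (ptrace2 ρSE - (dS : ℂ)⁻¹ • (1 : Matrix (Fin dS) (Fin dS) ℂ)))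
    (hsmall : χ ≤ 1 / (dS : ℝ)) :
    ∀ H : Matrix (Fin dS × Fin dE) (Fin dS × Fin dE) ℂ, H.IsHermitian →
      ‖(Matrix.trace (H *
          mcomm (ptrace2 ρSE ⊗ₖ (1 : Matrix (Fin dE) (Fin dE) ℂ)) ρSE))‖ ≤
        opNorm H * χ := by
  intro H hH
  have hdS0 : (dS : ℂ) ≠ 0 := by positivity
  haveI : Nonempty (Fin dS) := ⟨⟨0, by omega⟩⟩
  set Δ : Matrix (Fin dS) (Fin dS) ℂ :=
    ptrace2 ρSE - (dS : ℂ)⁻¹ • (1 : Matrix (Fin dS) (Fin dS) ℂ) with hΔdef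
  -- Δ is Hermitian
  have hpt : (ptrace2 ρSE).IsHermitian := by
    have := hρ.1
    ext i j
    simp only [conjTranspose_apply, ptrace2, of_apply, star_sum]
    refine Finset.sum_congr rfl fun k _ => ?_
    exact congrFun (congrFun this (i, k)) (j, k)
  have hone : ((dS : ℂ)⁻¹ • (1 : Matrix (Fin dS) (Fin dS) ℂ)).IsHermitian := by
    rw [Matrix.IsHermitian, conjTranspose_smul, conjTranspose_one]
    congr 1
    simp
  have hΔ : Δ.IsHermitian := hpt.sub hone
  -- trace of Δ is zero
  have htrpt : (ptrace2 ρSE).trace = 1 := by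
    rw [trace, ← htr, trace]
    rw [Fintype.sum_prod_type]
    exact Finset.sum_congr rfl fun i _ => rfl
  have htrΔ : Δ.trace = 0 := by
    rw [hΔdef, trace_sub, htrpt, trace_smul, trace_one]
    simp [Finset.card_univ]
    rw [inv_mul_cancel₀ hdS0]
    ring
  -- eigenvalue facts
  have hsum0 : ∑ i, hΔ.eigenvalues i = 0 := by
    have := (trace_hermitian Δ hΔ).symm.trans htrΔ
    exact_mod_cast this
  have hχeq : χ = ∑ i, |hΔ.eigenvalues i| := by
    rw [hχ]; exact traceNorm_hermitian Δ hΔ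
  have hχ0 : 0 ≤ χ := by
    rw [hχeq]; positivity
  have heig : ∀ i, |hΔ.eigenvalues i| ≤ χ / 2 := by
    intro i
    have h1 : |hΔ.eigenvalues i| + hΔ.eigenvalues i ≤ χ := by
      calc |hΔ.eigenvalues i| + hΔ.eigenvalues i
          ≤ ∑ j, (|hΔ.eigenvalues j| + hΔ.eigenvalues j) := by
            refine Finset.single_le_sum (f := fun j => |hΔ.eigenvalues j| + hΔ.eigenvalues j)
              (fun j _ => ?_) (Finset.mem_univ i)
            linarith [neg_abs_le (hΔ.eigenvalues j)]
        _ = χ := by rw [Finset.sum_add_distrib, hsum0, hχeq]; ring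
    have h2 : |hΔ.eigenvalues i| - hΔ.eigenvalues i ≤ χ := by
      calc |hΔ.eigenvalues i| - hΔ.eigenvalues i
          ≤ ∑ j, (|hΔ.eigenvalues j| - hΔ.eigenvalues j) := by
            refine Finset.single_le_sum (f := fun j => |hΔ.eigenvalues j| - hΔ.eigenvalues j)
              (fun j _ => ?_) (Finset.mem_univ i)
            linarith [le_abs_self (hΔ.eigenvalues j)]
        _ = χ := by rw [Finset.sum_sub_distrib, hsum0, hχeq]; ring
    cases abs_cases (hΔ.eigenvalues i) with
    | inl h => linarith [h.1]
    | inr h => linarith [h.1]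
  have hΔnorm : opNorm Δ ≤ χ / 2 :=
    opNorm_hermitian_le Δ hΔ (χ / 2) (by linarith) heig
  -- Kronecker
  set A : Matrix (Fin dS × Fin dE) (Fin dS × Fin dE) ℂ :=
    Δ ⊗ₖ (1 : Matrix (Fin dE) (Fin dE) ℂ) with hAdef
  have hAnorm : opNorm A ≤ χ / 2 := le_trans (opNorm_kron_one_le Δ) hΔnorm
  -- commutator rewrite
  have hcomm : mcomm (ptrace2 ρSE ⊗ₖ (1 : Matrix (Fin dE) (Fin dE) ℂ)) ρSE = mcomm A ρSE := by
    have hk : ptrace2 ρSE ⊗ₖ (1 : Matrix (Fin dE) (Fin dE) ℂ)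
        = A + (dS : ℂ)⁻¹ • (1 : Matrix (Fin dS × Fin dE) (Fin dS × Fin dE) ℂ) := by
      rw [hAdef, hΔdef]
      have hsubk : (ptrace2 ρSE - (dS : ℂ)⁻¹ • (1 : Matrix (Fin dS) (Fin dS) ℂ)) ⊗ₖ
          (1 : Matrix (Fin dE) (Fin dE) ℂ) = ptrace2 ρSE ⊗ₖ (1 : Matrix (Fin dE) (Fin dE) ℂ)
            - ((dS : ℂ)⁻¹ • (1 : Matrix (Fin dS) (Fin dS) ℂ)) ⊗ₖ (1 : Matrix (Fin dE) (Fin dE) ℂ) := by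
        ext ⟨i, k⟩ ⟨j, l⟩
        simp [kroneckerMap_apply, sub_mul]
      rw [hsubk, Matrix.smul_kronecker, Matrix.one_kronecker_one, sub_add_cancel]
    rw [hk, mcomm, mcomm]
    simp only [add_mul, mul_add, smul_mul_assoc, mul_smul_comm, one_mul, mul_one]
    abel
  rw [hcomm]
  -- trace cyclic rewrite
  have hcyc : (H * mcomm A ρSE).trace = ((H * A - A * H) * ρSE).trace := by
    rw [mcomm, mul_sub, sub_mul, trace_sub, trace_sub]
    congr 1
    · rw [mul_assoc]
    · rw [← mul_assoc, trace_mul_cycle]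
  rw [hcyc]
  have htrre : ρSE.trace.re = 1 := by rw [htr]; simp
  calc ‖(((H * A - A * H) * ρSE).trace)‖
      ≤ opNorm (H * A - A * H) * ρSE.trace.re := abs_trace_mul_le _ _ hρ
    _ = opNorm (H * A - A * H) := by rw [htrre, mul_one]
    _ ≤ opNorm (H * A) + opNorm (A * H) := opNorm_sub_le _ _
    _ ≤ opNorm H * opNorm A + opNorm A * opNorm H := by
        exact add_le_add (opNorm_mul_le H A) (opNorm_mul_le A H)
    _ ≤ opNorm H * (χ / 2) + (χ / 2) * opNorm H := by
        refine add_le_add ?_ ?_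
        · exact mul_le_mul_of_nonneg_left hAnorm (opNorm_nonneg H)
        · exact mul_le_mul_of_nonneg_right hAnorm (opNorm_nonneg H)
    _ = opNorm H * χ := by ring
end
end

section
/- Let ρ_{SE} be a density matrix on ℂ^{d_S} ⊗ ℂ^{d_E} (pure or mixed) whose reduced state ρ_S = Tr_E ρ_{SE} is positive definite, with d_S ≥ 2. Then for every Hermitian matrix H on ℂ^{d_S} ⊗ ℂ^{d_E}, the entropy rate is bounded by |Tr(H·[log₂(ρ_S) ⊗ I_E, ρ_{SE}])| ≤ 4·‖H‖_∞·log₂(d_S). -/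
open scoped Kronecker ComplexOrder
open Matrix MeasureTheory

noncomputable section

private lemma aux_log_le_div_e {y : ℝ} (hy : 0 < y) : Real.log y ≤ y / Real.exp 1 := by
  have h := Real.log_le_sub_one_of_pos (x := y / Real.exp 1) (by positivity)
  have h2 : Real.log (y / Real.exp 1) = Real.log y - 1 := by
    rw [Real.log_div (ne_of_gt hy) (by positivity), Real.log_exp]
  linarith

private lemma aux_mul_sq_log_le {μ : ℝ} (h0 : 0 < μ) (h1 : μ ≤ 1) :
    μ * Real.logb 2 μ ^ 2 ≤ 2 := by
  set s := Real.sqrt μ with hs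
  have hs0 : 0 < s := Real.sqrt_pos.2 h0
  have hss : s * s = μ := Real.mul_self_sqrt h0.le
  have hs1 : s ≤ 1 := by nlinarith
  have h2 : Real.log s⁻¹ ≤ s⁻¹ / Real.exp 1 := aux_log_le_div_e (by positivity)
  rw [Real.log_inv] at h2
  have he : (0:ℝ) < Real.exp 1 := Real.exp_pos 1
  have hlogs : Real.log s ≤ 0 := Real.log_nonpos hs0.le hs1
  -- s * (-log s) ≤ 1 / e
  have h3 : s * (-Real.log s) ≤ 1 / Real.exp 1 := by
    have := mul_le_mul_of_nonneg_left h2 hs0.le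
    have hinv : s * s⁻¹ = 1 := mul_inv_cancel₀ (ne_of_gt hs0)
    calc s * (-Real.log s) ≤ s * (s⁻¹ / Real.exp 1) := this
      _ = 1 / Real.exp 1 := by field_simp
  have hμlog : Real.log μ = 2 * Real.log s := by
    rw [hs, Real.log_sqrt h0.le]; ring
  have key : μ * Real.log μ ^ 2 ≤ 4 / Real.exp 1 ^ 2 := by
    have h4 : (s * (-Real.log s))^2 ≤ (1 / Real.exp 1)^2 := by
      apply sq_le_sq' <;> nlinarith
    have : μ * Real.log μ ^ 2 = 4 * (s * (-Real.log s))^2 := by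
      rw [hμlog, ← hss]; ring
    rw [this]
    rw [div_pow, one_pow] at h4
    have h5 := mul_le_mul_of_nonneg_left h4 (by norm_num : (0:ℝ) ≤ 4)
    calc 4 * (s * -Real.log s) ^ 2 ≤ 4 * (1 / Real.exp 1 ^ 2) := h5
      _ = 4 / Real.exp 1 ^2 := by ring
  have hl2 : (0.6931471803:ℝ) < Real.log 2 := Real.log_two_gt_d9
  have he9 : (2.7182818283:ℝ) < Real.exp 1 := Real.exp_one_gt_d9
  have hmain : μ * Real.log μ ^2 ≤ 2 * Real.log 2 ^2 := by
    have h5 : (4:ℝ) / Real.exp 1 ^2 ≤ 2 * Real.log 2 ^2 := by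
      rw [div_le_iff₀ (by positivity)]
      have ha : (0.48:ℝ) < Real.log 2 ^2 := by nlinarith
      have hb : (7.38:ℝ) < Real.exp 1 ^2 := by nlinarith
      nlinarith
    linarith
  rw [Real.logb, div_pow]
  rw [mul_div_assoc'] at *
  rw [div_le_iff₀ (by positivity)]
  nlinarith

private lemma aux_pointwise {d : ℕ} (hd : 2 ≤ d) {x : ℝ} (h0 : 0 < x) (h1 : x ≤ 1) :
    x * (Real.logb 2 x + Real.logb 2 d) ^ 2 ≤ x * Real.logb 2 d ^ 2 + 2 / d := by
  have hd0 : (0:ℝ) < d := by positivity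
  have hsum : Real.logb 2 x + Real.logb 2 d = Real.logb 2 (x * d) := by
    rw [Real.logb_mul (ne_of_gt h0) (ne_of_gt hd0)]
  rw [hsum]
  rcases le_or_gt 1 (x * d) with h | h
  · have h5 : 0 ≤ Real.logb 2 (x * d) := Real.logb_nonneg one_lt_two h
    have h6 : Real.logb 2 (x * d) ≤ Real.logb 2 d := by
      apply Real.logb_le_logb_of_le one_lt_two (by positivity)
      nlinarith
    have h7 : Real.logb 2 (x*d) ^2 ≤ Real.logb 2 d ^2 := by nlinarith
    have : 0 ≤ 2 / (d:ℝ) := by positivity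
    nlinarith
  · have hμ0 : 0 < x * d := by positivity
    have h8 : (x*d) * Real.logb 2 (x*d) ^ 2 ≤ 2 := aux_mul_sq_log_le hμ0 h.le
    have h9 : x * Real.logb 2 (x*d)^2 ≤ 2 / d := by
      rw [le_div_iff₀ hd0]
      calc x * Real.logb 2 (x*d)^2 * d = (x*d) * Real.logb 2 (x*d)^2 := by ring
        _ ≤ 2 := h8
    have : 0 ≤ x * Real.logb 2 d ^2 := by positivity
    linarith

private lemma aux_sum {d : ℕ} (hd : 2 ≤ d) (lam : Fin d → ℝ) (hpos : ∀ i, 0 < lam i)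
    (hsum : ∑ i, lam i = 1) :
    ∑ i, lam i * (Real.logb 2 (lam i) + Real.logb 2 d) ^ 2 ≤ 4 * Real.logb 2 d ^ 2 := by
  have hd0 : (0:ℝ) < d := by positivity
  have hle1 : ∀ i, lam i ≤ 1 := fun i => by
    calc lam i ≤ ∑ j, lam j := Finset.single_le_sum (fun j _ => (hpos j).le) (Finset.mem_univ i)
      _ = 1 := hsum
  have hC : 1 ≤ Real.logb 2 d := by
    calc (1:ℝ) = Real.logb 2 2 := (Real.logb_self_eq_one one_lt_two).symm
      _ ≤ Real.logb 2 d := Real.logb_le_logb_of_le one_lt_two two_pos (by exact_mod_cast hd)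
  calc ∑ i, lam i * (Real.logb 2 (lam i) + Real.logb 2 d) ^ 2
      ≤ ∑ i : Fin d, (lam i * Real.logb 2 d ^2 + 2 / d) :=
        Finset.sum_le_sum (fun i _ => aux_pointwise hd (hpos i) (hle1 i))
    _ = Real.logb 2 d ^2 + 2 := by
        rw [Finset.sum_add_distrib, ← Finset.sum_mul, hsum, Finset.sum_const]
        simp only [Finset.card_univ, Fintype.card_fin, nsmul_eq_mul]
        field_simp
    _ ≤ 4 * Real.logb 2 d ^2 := by nlinarith

set_option linter.unusedSectionVars false

section helpers
variable {n : Type*} [Fintype n] [DecidableEq n]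


private lemma re_trace_form (A : Matrix n n ℂ) :
    (Matrix.trace (Aᴴ * A)).re = ∑ p : n × n, ‖A p.1 p.2‖ ^ 2 := by
  have h : Matrix.trace (Aᴴ * A) = ∑ j, ∑ i, (starRingEnd ℂ) (A i j) * A i j := by
    simp [Matrix.trace, Matrix.diag, Matrix.mul_apply, Matrix.conjTranspose_apply]
  rw [h, Fintype.sum_prod_type, Finset.sum_comm]
  rw [Complex.re_sum]
  refine Finset.sum_congr rfl fun j _ => ?_
  rw [Complex.re_sum]
  refine Finset.sum_congr rfl fun i _ => ?_
  rw [mul_comm, Complex.mul_conj, Complex.ofReal_re, Complex.normSq_eq_norm_sq]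

private lemma abs_trace_CS (A B : Matrix n n ℂ) :
    ‖Matrix.trace (Aᴴ * B)‖ ≤
      Real.sqrt ((Matrix.trace (Aᴴ * A)).re) * Real.sqrt ((Matrix.trace (Bᴴ * B)).re) := by
  classical
  set v : EuclideanSpace ℂ (n × n) := (WithLp.equiv 2 _).symm fun p => A p.1 p.2 with hv
  set w : EuclideanSpace ℂ (n × n) := (WithLp.equiv 2 _).symm fun p => B p.1 p.2 with hw
  have hinner : (inner ℂ v w) = Matrix.trace (Aᴴ * B) := by
    simp only [PiLp.inner_apply, RCLike.inner_apply, hv, hw, WithLp.equiv_symm_apply, PiLp.toLp_apply]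
    simp only [Matrix.trace, Matrix.diag, Matrix.mul_apply, Matrix.conjTranspose_apply,
      Fintype.sum_prod_type]
    rw [Finset.sum_comm]
    simp only [RCLike.star_def]
    exact Finset.sum_congr rfl fun _ _ => Finset.sum_congr rfl fun _ _ => mul_comm _ _
  have hnv : ‖v‖ = Real.sqrt ((Matrix.trace (Aᴴ * A)).re) := by
    rw [EuclideanSpace.norm_eq, re_trace_form]
    simp [hv, WithLp.equiv_symm_apply]
  have hnw : ‖w‖ = Real.sqrt ((Matrix.trace (Bᴴ * B)).re) := by
    rw [EuclideanSpace.norm_eq, re_trace_form]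
    simp [hw, WithLp.equiv_symm_apply]
  calc ‖Matrix.trace (Aᴴ * B)‖ = ‖(inner ℂ v w)‖ := by
        rw [hinner]
    _ ≤ ‖v‖ * ‖w‖ := norm_inner_le_norm v w
    _ = _ := by rw [hnv, hnw]

private lemma frob_mul_le (H A : Matrix n n ℂ) :
    (Matrix.trace ((H * A)ᴴ * (H * A))).re ≤ opNorm H ^ 2 * (Matrix.trace (Aᴴ * A)).re := by
  rw [re_trace_form, re_trace_form]
  have key : ∀ j, ∑ i, ‖(H * A) i j‖ ^ 2 ≤ opNorm H ^ 2 * ∑ i, ‖A i j‖ ^ 2 := by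
    intro j
    set y : EuclideanSpace ℂ n := (WithLp.equiv 2 _).symm fun i => A i j with hy
    have happ : Matrix.toEuclideanCLM (𝕜 := ℂ) H y
        = (WithLp.equiv 2 _).symm fun i => (H * A) i j := by
      rw [hy, WithLp.equiv_symm_apply, Matrix.toEuclideanCLM_toLp]
      refine congrArg _ ?_
      ext i
      simp [Matrix.toLin'_apply, Matrix.mulVec, Matrix.mul_apply, dotProduct]
    have h1 : ∑ i, ‖(H * A) i j‖ ^ 2 = ‖Matrix.toEuclideanCLM (𝕜 := ℂ) H y‖ ^ 2 := by
      rw [happ, EuclideanSpace.norm_eq, Real.sq_sqrt (by positivity)]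
      rfl
    have h2 : ‖y‖ ^ 2 = ∑ i, ‖A i j‖ ^ 2 := by
      rw [hy, EuclideanSpace.norm_eq, Real.sq_sqrt (by positivity)]
      rfl
    rw [h1, ← h2]
    have h3 : ‖Matrix.toEuclideanCLM (𝕜 := ℂ) H y‖ ≤ opNorm H * ‖y‖ :=
      (Matrix.toEuclideanCLM (𝕜 := ℂ) H).le_opNorm y
    have h4 : (0:ℝ) ≤ opNorm H := norm_nonneg _
    calc ‖Matrix.toEuclideanCLM (𝕜 := ℂ) H y‖ ^ 2 ≤ (opNorm H * ‖y‖) ^ 2 := by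
          have := norm_nonneg (Matrix.toEuclideanCLM (𝕜 := ℂ) H y)
          nlinarith
      _ = opNorm H ^ 2 * ‖y‖ ^ 2 := by ring
  calc ∑ p : n × n, ‖(H * A) p.1 p.2‖ ^ 2 = ∑ j, ∑ i, ‖(H * A) i j‖ ^ 2 := by
        rw [Fintype.sum_prod_type]; exact Finset.sum_comm
    _ ≤ ∑ j, (opNorm H ^ 2 * ∑ i, ‖A i j‖ ^ 2) := Finset.sum_le_sum fun j _ => key j
    _ = opNorm H ^ 2 * ∑ p : n × n, ‖A p.1 p.2‖ ^ 2 := by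
        rw [← Finset.mul_sum, Fintype.sum_prod_type]
        rw [show (∑ j, ∑ i, ‖A i j‖ ^ 2) = ∑ i, ∑ j, ‖A i j‖ ^ 2 from Finset.sum_comm]

private lemma trace_kron_one_mul {e : Type*} [Fintype e] [DecidableEq e]
    (X : Matrix n n ℂ) (ρ : Matrix (n × e) (n × e) ℂ) :
    Matrix.trace ((X ⊗ₖ (1 : Matrix e e ℂ)) * ρ) = Matrix.trace (X * ptrace2 ρ) := by
  have L : Matrix.trace ((X ⊗ₖ (1 : Matrix e e ℂ)) * ρ)
      = ∑ i, ∑ k, ∑ j, X i j * ρ (j, k) (i, k) := by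
    simp [Matrix.trace, Matrix.diag, Matrix.mul_apply, Matrix.kroneckerMap_apply,
      Matrix.one_apply, Fintype.sum_prod_type, mul_ite, ite_mul, mul_zero, zero_mul, mul_one,
      Finset.sum_ite_eq, Finset.sum_ite_eq']
  have R : Matrix.trace (X * ptrace2 ρ)
      = ∑ i, ∑ j, ∑ k, X i j * ρ (j, k) (i, k) := by
    simp [Matrix.trace, Matrix.diag, Matrix.mul_apply, ptrace2, Finset.mul_sum]
  rw [L, R]
  exact Finset.sum_congr rfl fun i _ => Finset.sum_comm

private lemma trace_ptrace {e : Type*} [Fintype e] (ρ : Matrix (n × e) (n × e) ℂ) :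
    Matrix.trace (ptrace2 ρ) = Matrix.trace ρ := by
  simp [Matrix.trace, Matrix.diag, ptrace2, Fintype.sum_prod_type]

private lemma kronConjTAux {e : Type*} [Fintype e] [DecidableEq e]
    (A : Matrix n n ℂ) (B : Matrix e e ℂ) : (A ⊗ₖ B)ᴴ = Aᴴ ⊗ₖ Bᴴ := by
  ext ⟨i, k⟩ ⟨j, l⟩
  simp [Matrix.conjTranspose_apply, Matrix.kroneckerMap_apply, star_mul']

private lemma traceCyc (X Y S : Matrix n n ℂ) :
    Matrix.trace (X * (Y * (S * S))) = Matrix.trace ((S * X) * (Y * S)) := by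
  have h1 : X * (Y * (S * S)) = (X * Y * S) * S := by simp only [mul_assoc]
  have h2 : (S * X) * (Y * S) = S * (X * Y * S) := by simp only [mul_assoc]
  rw [h1, h2, Matrix.trace_mul_comm]

end helpers

section cfcsec
variable {n : Type*} [Fintype n] [DecidableEq n] {A : Matrix n n ℂ} (hA : A.IsHermitian)


private lemma cfcMulAux (f g : ℝ → ℝ) :
    hA.cfc f * hA.cfc g = hA.cfc fun x => f x * g x := by
  have hU : star (hA.eigenvectorUnitary : Matrix n n ℂ) * hA.eigenvectorUnitary = 1 :=
    Matrix.mem_unitaryGroup_iff'.mp hA.eigenvectorUnitary.2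
  simp only [Matrix.IsHermitian.cfc, Unitary.conjStarAlgAut_apply]
  simp only [mul_assoc]
  rw [← mul_assoc (star (hA.eigenvectorUnitary : Matrix n n ℂ)) hA.eigenvectorUnitary, hU, one_mul]
  rw [← mul_assoc (Matrix.diagonal _) (Matrix.diagonal _), Matrix.diagonal_mul_diagonal]
  congr 2
  ext i j
  simp [Matrix.diagonal_apply, Function.comp]

private lemma cfcTraceAux (f : ℝ → ℝ) :
    (hA.cfc f).trace = ∑ i, (f (hA.eigenvalues i) : ℂ) := by
  have hU : star (hA.eigenvectorUnitary : Matrix n n ℂ) * hA.eigenvectorUnitary = 1 :=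
    Matrix.mem_unitaryGroup_iff'.mp hA.eigenvectorUnitary.2
  simp only [Matrix.IsHermitian.cfc, Unitary.conjStarAlgAut_apply]
  rw [Matrix.trace_mul_cycle, hU, one_mul, Matrix.trace_diagonal]
  simp [Function.comp]

private lemma cfcHermAux (f : ℝ → ℝ) : (hA.cfc f).IsHermitian := by
  simp only [Matrix.IsHermitian.cfc, Unitary.conjStarAlgAut_apply]
  have h1 : ((hA.eigenvectorUnitary : Matrix n n ℂ) * Matrix.diagonal (RCLike.ofReal ∘ f ∘ hA.eigenvalues) *
      star (hA.eigenvectorUnitary : Matrix n n ℂ))ᴴ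
      = star (star (hA.eigenvectorUnitary : Matrix n n ℂ))
        * (Matrix.diagonal (RCLike.ofReal ∘ f ∘ hA.eigenvalues))ᴴ
        * star (hA.eigenvectorUnitary : Matrix n n ℂ) := by
    rw [Matrix.conjTranspose_mul, Matrix.conjTranspose_mul]
    simp only [← Matrix.star_eq_conjTranspose]
    rw [mul_assoc]
  unfold Matrix.IsHermitian
  rw [h1, star_star, Matrix.diagonal_conjTranspose]
  congr 2
  ext i j
  simp [Matrix.diagonal_apply, Function.comp]

private lemma cfcIdAux : A = hA.cfc fun x => x := by
  conv_lhs => rw [hA.spectral_theorem]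
  rfl

private lemma cfcAddConstAux (f : ℝ → ℝ) (c : ℝ) :
    hA.cfc (fun x => f x + c) = hA.cfc f + (c : ℂ) • 1 := by
  have hUU : (hA.eigenvectorUnitary : Matrix n n ℂ) * star (hA.eigenvectorUnitary : Matrix n n ℂ) = 1 :=
    Matrix.mem_unitaryGroup_iff.mp hA.eigenvectorUnitary.2
  simp only [Matrix.IsHermitian.cfc, Unitary.conjStarAlgAut_apply]
  have hd : Matrix.diagonal (RCLike.ofReal ∘ (fun x => f x + c) ∘ hA.eigenvalues)
      = Matrix.diagonal (RCLike.ofReal ∘ f ∘ hA.eigenvalues) + (c : ℂ) • (1 : Matrix n n ℂ) := by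
    ext i j
    by_cases h : i = j
    · subst h; simp [Matrix.diagonal, Matrix.one_apply, Function.comp]
    · simp [Matrix.diagonal_apply_ne _ h, Matrix.one_apply_ne h,
        Matrix.add_apply, Matrix.smul_apply, h]
  rw [hd, mul_add, add_mul, mul_smul_comm, smul_mul_assoc, mul_one, hUU]

end cfcsec

/-- **Lemma 4.** For any density matrix `ρSE` (pure or mixed) whose
reduced state is positive definite, with `d_S ≥ 2`, the entropy rate is bounded by
`4·‖H‖_∞·log₂(d_S)` for every Hermitian `H`. -/
theorem entropy_rate_le_four_log_dim {dS dE : ℕ} (hdS : 2 ≤ dS)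
    (ρSE : Matrix (Fin dS × Fin dE) (Fin dS × Fin dE) ℂ)
    (hρ : ρSE.PosSemidef) (htr : ρSE.trace = 1)
    (hpd : (ptrace2 ρSE).PosDef) :
    ∀ H : Matrix (Fin dS × Fin dE) (Fin dS × Fin dE) ℂ, H.IsHermitian →
      ‖(Matrix.trace (H *
          mcomm (matLog2 (ptrace2 ρSE) ⊗ₖ (1 : Matrix (Fin dE) (Fin dE) ℂ)) ρSE))‖ ≤
        4 * opNorm H * Real.logb 2 (dS : ℝ) := by
  intro H hH
  classical
  set ρS := ptrace2 ρSE with hρSdef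
  have hS : ρS.IsHermitian := hpd.1
  set C := Real.logb 2 (dS : ℝ) with hCdef
  set lam := hS.eigenvalues with hlamdef
  have hlampos : ∀ i, 0 < lam i := fun i => hpd.eigenvalues_pos i
  have htrS : ρS.trace = 1 := by
    have h := trace_ptrace (n := Fin dS) (e := Fin dE) ρSE
    rw [hρSdef, h, htr]
  have hsum1 : ∑ i, lam i = 1 := by
    have h1 : ρS.trace = ∑ i, (lam i : ℂ) := by
      conv_lhs => rw [cfcIdAux hS]
      rw [cfcTraceAux hS]
    have h2 : ((∑ i, lam i : ℝ) : ℂ) = ((1 : ℝ) : ℂ) := by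
      push_cast
      rw [← h1, htrS]
    exact_mod_cast h2
  have hC1 : 1 ≤ C := by
    rw [hCdef]
    calc (1:ℝ) = Real.logb 2 2 := (Real.logb_self_eq_one one_lt_two).symm
      _ ≤ Real.logb 2 (dS : ℝ) :=
        Real.logb_le_logb_of_le one_lt_two two_pos (by exact_mod_cast hdS)
  set M := hS.cfc (fun x => Real.logb 2 x + C) with hM
  set K := M ⊗ₖ (1 : Matrix (Fin dE) (Fin dE) ℂ) with hK
  have hml : matLog2 ρS = hS.cfc (Real.logb 2) := by
    rw [matLog2, dif_pos hS]
  have hKsplit : K = matLog2 ρS ⊗ₖ (1 : Matrix (Fin dE) (Fin dE) ℂ)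
      + (C : ℂ) • (1 : Matrix (Fin dS × Fin dE) (Fin dS × Fin dE) ℂ) := by
    rw [hK, hM, cfcAddConstAux hS (Real.logb 2) C, hml, Matrix.add_kronecker,
      Matrix.smul_kronecker, Matrix.one_kronecker_one]
  have hcomm : mcomm (matLog2 ρS ⊗ₖ (1 : Matrix (Fin dE) (Fin dE) ℂ)) ρSE = mcomm K ρSE := by
    rw [hKsplit]
    simp only [mcomm, add_mul, mul_add, smul_mul_assoc, mul_smul_comm, one_mul, mul_one]
    abel
  have hMh : M.IsHermitian := cfcHermAux hS _
  have hKh : Kᴴ = K := by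
    rw [hK, kronConjTAux, hMh.eq, Matrix.conjTranspose_one]
  set S := hρ.1.cfc Real.sqrt with hSdef
  have hSh : Sᴴ = S := (cfcHermAux hρ.1 _).eq
  have hSS : S * S = ρSE := by
    have hev : (fun x => Real.sqrt x * Real.sqrt x) ∘ hρ.1.eigenvalues = (fun x => x) ∘ hρ.1.eigenvalues :=
      funext fun i => Real.mul_self_sqrt (hρ.eigenvalues_nonneg i)
    rw [hSdef, cfcMulAux]
    conv_rhs => rw [cfcIdAux hρ.1]
    simp only [Matrix.IsHermitian.cfc]
    rw [hev]
  have hHSadj : (H * S)ᴴ = S * H := by rw [Matrix.conjTranspose_mul, hSh, hH.eq]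
  have hKSadj : (K * S)ᴴ = S * K := by rw [Matrix.conjTranspose_mul, hSh, hKh]
  -- first term
  have t1eq : Matrix.trace (H * (K * ρSE)) = Matrix.trace ((H * S)ᴴ * (K * S)) := by
    rw [hHSadj, ← hSS, traceCyc]
  have t2eq : Matrix.trace (H * (ρSE * K)) = Matrix.trace ((K * S)ᴴ * (H * S)) := by
    rw [hKSadj]
    have h1 : H * (ρSE * K) = H * ρSE * K := by rw [mul_assoc]
    rw [h1, Matrix.trace_mul_cycle, ← hSS]
    have h2 : K * H * (S * S) = K * (H * (S * S)) := by simp only [mul_assoc]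
    rw [h2, traceCyc]
  -- operator norm bound
  have bound1 : (Matrix.trace ((H * S)ᴴ * (H * S))).re ≤ opNorm H ^ 2 := by
    have h := frob_mul_le H S
    have htr1 : (Matrix.trace (Sᴴ * S)).re = 1 := by
      rw [hSh, hSS, htr]
      norm_num
    rw [htr1, mul_one] at h
    exact h
  -- log bound
  have bound2 : (Matrix.trace ((K * S)ᴴ * (K * S))).re ≤ 4 * C ^ 2 := by
    have h1 : Matrix.trace ((K * S)ᴴ * (K * S)) = Matrix.trace (K * (K * ρSE)) := by
      rw [hKSadj, ← hSS, traceCyc]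
    have h2 : K * (K * ρSE) = (((M * M) ⊗ₖ (1 : Matrix (Fin dE) (Fin dE) ℂ)) : Matrix (Fin dS × Fin dE) (Fin dS × Fin dE) ℂ) * ρSE := by
      rw [hK, ← mul_assoc, ← Matrix.mul_kronecker_mul, one_mul]
    have h3 : Matrix.trace ((((M * M) ⊗ₖ (1 : Matrix (Fin dE) (Fin dE) ℂ)) : Matrix (Fin dS × Fin dE) (Fin dS × Fin dE) ℂ) * ρSE)
        = Matrix.trace ((M * M) * ρS) := trace_kron_one_mul (M * M) ρSE
    have h4 : (M * M) * ρS
        = hS.cfc fun x => ((Real.logb 2 x + C) * (Real.logb 2 x + C)) * x := by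
      have hid : ρS = hS.cfc fun x => x := cfcIdAux hS
      calc (M * M) * ρS
          = (hS.cfc fun x => (Real.logb 2 x + C) * (Real.logb 2 x + C))
            * (hS.cfc fun x => x) := by
            rw [hM, cfcMulAux hS]
            exact congrArg
              (fun X => (hS.cfc fun x => (Real.logb 2 x + C) * (Real.logb 2 x + C)) * X) hid
        _ = hS.cfc fun x => ((Real.logb 2 x + C) * (Real.logb 2 x + C)) * x := cfcMulAux hS _ _
    have h5 : Matrix.trace ((M * M) * ρS)
        = ∑ i, ((((Real.logb 2 (lam i) + C) * (Real.logb 2 (lam i) + C)) * lam i : ℝ) : ℂ) := by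
      rw [h4, cfcTraceAux]
    have h6 : (Matrix.trace ((K * S)ᴴ * (K * S))).re
        = ∑ i, ((Real.logb 2 (lam i) + C) * (Real.logb 2 (lam i) + C)) * lam i := by
      rw [h1, h2, h3, h5]
      rw [Complex.re_sum]
      exact Finset.sum_congr rfl fun i _ => by rw [Complex.ofReal_re]
    rw [h6]
    have h7 : ∑ i, ((Real.logb 2 (lam i) + C) * (Real.logb 2 (lam i) + C)) * lam i
        = ∑ i, lam i * (Real.logb 2 (lam i) + C) ^ 2 :=
      Finset.sum_congr rfl fun i _ => by ring
    rw [h7, hCdef]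
    calc ∑ i, lam i * (Real.logb 2 (lam i) + Real.logb 2 (dS : ℝ)) ^ 2
        ≤ 4 * Real.logb 2 (dS : ℝ) ^ 2 := aux_sum hdS lam hlampos hsum1
      _ = 4 * Real.logb 2 (dS : ℝ) ^ 2 := rfl
  have sq1 : Real.sqrt ((Matrix.trace ((H * S)ᴴ * (H * S))).re) ≤ opNorm H := by
    have hnn : (0:ℝ) ≤ opNorm H := norm_nonneg _
    have h := Real.sqrt_le_sqrt bound1
    rwa [Real.sqrt_sq hnn] at h
  have sq2 : Real.sqrt ((Matrix.trace ((K * S)ᴴ * (K * S))).re) ≤ 2 * C := by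
    have h := Real.sqrt_le_sqrt bound2
    rw [show (4:ℝ) * C ^ 2 = (2 * C) ^ 2 by ring] at h
    rwa [Real.sqrt_sq (by linarith)] at h
  have habs1 : ‖Matrix.trace (H * (K * ρSE))‖ ≤ opNorm H * (2 * C) := by
    rw [t1eq]
    calc ‖Matrix.trace ((H * S)ᴴ * (K * S))‖
        ≤ Real.sqrt ((Matrix.trace ((H * S)ᴴ * (H * S))).re)
          * Real.sqrt ((Matrix.trace ((K * S)ᴴ * (K * S))).re) := abs_trace_CS _ _
      _ ≤ opNorm H * (2 * C) := by
          apply mul_le_mul sq1 sq2 (Real.sqrt_nonneg _) (norm_nonneg _)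
  have habs2 : ‖Matrix.trace (H * (ρSE * K))‖ ≤ opNorm H * (2 * C) := by
    rw [t2eq]
    calc ‖Matrix.trace ((K * S)ᴴ * (H * S))‖
        ≤ Real.sqrt ((Matrix.trace ((K * S)ᴴ * (K * S))).re)
          * Real.sqrt ((Matrix.trace ((H * S)ᴴ * (H * S))).re) := abs_trace_CS _ _
      _ ≤ (2 * C) * opNorm H := by
          apply mul_le_mul sq2 sq1 (Real.sqrt_nonneg _) (by linarith)
      _ = opNorm H * (2 * C) := by ring
  rw [hcomm]
  have hsplit : Matrix.trace (H * mcomm K ρSE)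
      = Matrix.trace (H * (K * ρSE)) - Matrix.trace (H * (ρSE * K)) := by
    rw [mcomm, mul_sub, Matrix.trace_sub]
  rw [hsplit]
  calc ‖Matrix.trace (H * (K * ρSE)) - Matrix.trace (H * (ρSE * K))‖
      = ‖Matrix.trace (H * (K * ρSE)) - Matrix.trace (H * (ρSE * K))‖ :=
        rfl
    _ ≤ ‖Matrix.trace (H * (K * ρSE))‖ + ‖Matrix.trace (H * (ρSE * K))‖ := norm_sub_le _ _
    _ = ‖Matrix.trace (H * (K * ρSE))‖
        + ‖Matrix.trace (H * (ρSE * K))‖ := by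
        rfl
    _ ≤ opNorm H * (2 * C) + opNorm H * (2 * C) := add_le_add habs1 habs2
    _ = 4 * opNorm H * C := by ring
end
end

section
/- Let ρ_{SE} be a density matrix on ℂ^{d_S} ⊗ ℂ^{d_E} with reduced state ρ_S = Tr_E ρ_{SE}. Then for every Hermitian matrix H on ℂ^{d_S} ⊗ ℂ^{d_E}: |Tr(H·[ρ_S ⊗ I_E, ρ_{SE}])| ≤ 2·‖H‖_∞·‖ρ_S − I_S/d_S‖_∞. -/
open scoped Kronecker ComplexOrder
open Matrix MeasureTheory

noncomputable section

lemma clm_apply_eq {n : Type*} [Fintype n] [DecidableEq n] (A : Matrix n n ℂ)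
    (x : EuclideanSpace ℂ n) (p : n) :
    Matrix.toEuclideanCLM (𝕜 := ℂ) A x p = A.mulVec (fun q => x q) p := by
  conv_lhs => rw [← Equiv.symm_apply_apply (WithLp.equiv 2 (n → ℂ)) x]
  simp only [Equiv.symm_apply_apply]
  rfl

lemma opNorm_mul_le {n : Type*} [Fintype n] [DecidableEq n] (A B : Matrix n n ℂ) :
    opNorm (A * B) ≤ opNorm A * opNorm B := by
  unfold opNorm; rw [_root_.map_mul]; exact norm_mul_le _ _

lemma opNorm_kronecker_one_le {m e : Type*} [Fintype m] [DecidableEq m] [Fintype e]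
    [DecidableEq e] (B : Matrix m m ℂ) :
    opNorm (B ⊗ₖ (1 : Matrix e e ℂ)) ≤ opNorm B := by
  unfold opNorm
  refine ContinuousLinearMap.opNorm_le_bound _ (norm_nonneg _) fun x => ?_
  set y : e → EuclideanSpace ℂ m := fun k => (WithLp.equiv 2 (m → ℂ)).symm (fun j => x (j, k))
    with hy
  have hx : ‖x‖ ^ 2 = ∑ k, ‖y k‖ ^ 2 := by
    simp_rw [EuclideanSpace.norm_eq,
      Real.sq_sqrt (Finset.sum_nonneg fun _ _ => sq_nonneg _)]
    rw [Fintype.sum_prod_type]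
    rw [Finset.sum_comm]
    rfl
  have happ : ∀ p : m × e, Matrix.toEuclideanCLM (𝕜 := ℂ) (B ⊗ₖ (1 : Matrix e e ℂ)) x p
      = Matrix.toEuclideanCLM (𝕜 := ℂ) B (y p.2) p.1 := by
    rintro ⟨i, k⟩
    rw [clm_apply_eq, clm_apply_eq]
    simp [Matrix.mulVec, dotProduct, Fintype.sum_prod_type, Matrix.one_apply,
      mul_ite, ite_mul, y]
  have hsq : ‖Matrix.toEuclideanCLM (𝕜 := ℂ) (B ⊗ₖ (1 : Matrix e e ℂ)) x‖ ^ 2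
      ≤ (‖Matrix.toEuclideanCLM (𝕜 := ℂ) B‖ * ‖x‖) ^ 2 := by
    rw [EuclideanSpace.norm_eq, Real.sq_sqrt (Finset.sum_nonneg fun _ _ => sq_nonneg _)]
    calc ∑ p : m × e, ‖Matrix.toEuclideanCLM (𝕜 := ℂ) (B ⊗ₖ (1 : Matrix e e ℂ)) x p‖ ^ 2
        = ∑ k, ∑ i, ‖Matrix.toEuclideanCLM (𝕜 := ℂ) B (y k) i‖ ^ 2 := by
          simp_rw [happ]; rw [Fintype.sum_prod_type]; exact Finset.sum_comm
      _ = ∑ k, ‖Matrix.toEuclideanCLM (𝕜 := ℂ) B (y k)‖ ^ 2 := by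
          simp_rw [EuclideanSpace.norm_eq,
            Real.sq_sqrt (Finset.sum_nonneg fun _ _ => sq_nonneg _)]
      _ ≤ ∑ k, (‖Matrix.toEuclideanCLM (𝕜 := ℂ) B‖ * ‖y k‖) ^ 2 :=
          Finset.sum_le_sum fun k _ => pow_le_pow_left₀ (norm_nonneg _)
            ((Matrix.toEuclideanCLM (𝕜 := ℂ) B).le_opNorm _) 2
      _ = (‖Matrix.toEuclideanCLM (𝕜 := ℂ) B‖ * ‖x‖) ^ 2 := by
          simp only [mul_pow, hx, Finset.mul_sum]
  have h1 := Real.sqrt_le_sqrt hsq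
  rwa [Real.sqrt_sq (norm_nonneg _),
    Real.sqrt_sq (mul_nonneg (norm_nonneg _) (norm_nonneg _))] at h1

open scoped MatrixOrder in
lemma abs_trace_mul_le {n : Type*} [Fintype n] [DecidableEq n] (M ρ : Matrix n n ℂ)
    (hρ : ρ.PosSemidef) :
    ‖(M * ρ).trace‖ ≤ opNorm M * ρ.trace.re := by
  set S := CFC.sqrt ρ with hSdef
  have hSH : Sᴴ = S := (Matrix.nonneg_iff_posSemidef.mp (CFC.sqrt_nonneg ρ)).isHermitian
  have hSS : S * S = ρ := CFC.sqrt_mul_sqrt_self ρ hρ.nonneg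
  have hstar : ∀ i j, (starRingEnd ℂ) (S j i) = S i j := fun i j => by
    conv_rhs => rw [← hSH]
    simp [Matrix.conjTranspose_apply]
  set v : n → EuclideanSpace ℂ n := fun i => (WithLp.equiv 2 (n → ℂ)).symm (fun j => S j i)
    with hv
  have hcol : ∀ i, (S * M * S) i i
      = inner ℂ (v i) (Matrix.toEuclideanCLM (𝕜 := ℂ) M (v i)) := by
    intro i
    calc (S * M * S) i i = ∑ j, ∑ k, S i k * M k j * S j i := by
          simp [Matrix.mul_apply, Finset.sum_mul]
      _ = ∑ j, ∑ k, S i j * (M j k * S k i) := by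
          rw [Finset.sum_comm]; congr 1; ext j; congr 1; ext k; ring
      _ = inner ℂ (v i) (Matrix.toEuclideanCLM (𝕜 := ℂ) M (v i)) := by
          simp only [PiLp.inner_apply, RCLike.inner_apply, clm_apply_eq]
          simp [v, Matrix.mulVec, dotProduct, hstar, Finset.mul_sum]
          simp only [Finset.sum_mul]
          exact Finset.sum_congr rfl fun j _ => Finset.sum_congr rfl fun k _ => by ring
  have hnv : ∀ i, ‖v i‖ ^ 2 = ∑ j, ‖S j i‖ ^ 2 := fun i => by
    rw [EuclideanSpace.norm_eq, Real.sq_sqrt (Finset.sum_nonneg fun _ _ => sq_nonneg _)]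
    rfl
  have hb : ∀ i, ‖(S * M * S) i i‖ ≤ opNorm M * ‖v i‖ ^ 2 := by
    intro i
    rw [hcol i]
    have h1 : ‖(inner (𝕜 := ℂ) (v i) (Matrix.toEuclideanCLM (𝕜 := ℂ) M (v i)))‖
        ≤ ‖v i‖ * ‖Matrix.toEuclideanCLM (𝕜 := ℂ) M (v i)‖ := by
      exact norm_inner_le_norm (𝕜 := ℂ) (v i) _
    refine h1.trans ?_
    calc ‖v i‖ * ‖Matrix.toEuclideanCLM (𝕜 := ℂ) M (v i)‖
        ≤ ‖v i‖ * (opNorm M * ‖v i‖) := by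
          gcongr
          exact (Matrix.toEuclideanCLM (𝕜 := ℂ) M).le_opNorm _
      _ = opNorm M * ‖v i‖ ^ 2 := by ring
  have hsum : ∑ i, ‖v i‖ ^ 2 = ρ.trace.re := by
    have h2 : ∀ i, (ρ i i).re = ∑ j, ‖S j i‖ ^ 2 := fun i => by
      rw [← hSS]
      have : (S * S) i i = ∑ j, (‖S j i‖ ^ 2 : ℂ) := by
        simp only [Matrix.mul_apply]
        congr 1; ext j
        rw [← hstar i j, mul_comm, Complex.mul_conj']
        try norm_cast
      rw [this]
      rw [Complex.re_sum]
      simp [← Complex.ofReal_pow]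
    simp only [hnv, Matrix.trace, Matrix.diag, Complex.re_sum, h2]
  have key : (M * ρ).trace = (S * M * S).trace := by
    rw [← hSS, ← mul_assoc, Matrix.trace_mul_cycle]
  rw [key]
  calc ‖(S * M * S).trace‖ ≤ ∑ i, ‖(S * M * S) i i‖ :=
        norm_sum_le _ _
    _ ≤ ∑ i, opNorm M * ‖v i‖ ^ 2 := Finset.sum_le_sum fun i _ => hb i
    _ = opNorm M * ρ.trace.re := by rw [← Finset.mul_sum, hsum]

/-- For any density matrix `ρSE` and Hermitian `H`, the purity rate is
bounded by `2·‖H‖_∞·‖ρS − I_S/d_S‖_∞`. -/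
theorem purity_rate_le_opNorm_diff {dS dE : ℕ}
    (ρSE : Matrix (Fin dS × Fin dE) (Fin dS × Fin dE) ℂ)
    (hρ : ρSE.PosSemidef) (htr : ρSE.trace = 1) :
    ∀ H : Matrix (Fin dS × Fin dE) (Fin dS × Fin dE) ℂ, H.IsHermitian →
      ‖(Matrix.trace (H *
          mcomm (ptrace2 ρSE ⊗ₖ (1 : Matrix (Fin dE) (Fin dE) ℂ)) ρSE))‖ ≤
        2 * opNorm H *
          opNorm (ptrace2 ρSE - (dS : ℂ)⁻¹ • (1 : Matrix (Fin dS) (Fin dS) ℂ)) := by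
  intro H hH
  set c : ℂ := (dS : ℂ)⁻¹ with hc
  set B : Matrix (Fin dS) (Fin dS) ℂ := ptrace2 ρSE - c • 1 with hB
  set A : Matrix (Fin dS × Fin dE) (Fin dS × Fin dE) ℂ :=
    B ⊗ₖ (1 : Matrix (Fin dE) (Fin dE) ℂ) with hA
  have hcomm : mcomm (ptrace2 ρSE ⊗ₖ (1 : Matrix (Fin dE) (Fin dE) ℂ)) ρSE = mcomm A ρSE := by
    have h1 : ptrace2 ρSE ⊗ₖ (1 : Matrix (Fin dE) (Fin dE) ℂ) = A + c • 1 := by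
      rw [hA, hB]
      conv_lhs => rw [← sub_add_cancel (ptrace2 ρSE) (c • (1 : Matrix (Fin dS) (Fin dS) ℂ))]
      rw [Matrix.add_kronecker, Matrix.smul_kronecker, Matrix.one_kronecker_one]
    rw [h1]
    simp only [mcomm, add_mul, mul_add, Matrix.smul_mul, Matrix.mul_smul, one_mul, mul_one]
    abel
  rw [hcomm]
  have e1 : (H * mcomm A ρSE).trace = ((H * A) * ρSE).trace - ((A * H) * ρSE).trace := by
    simp only [mcomm, mul_sub, Matrix.trace_sub, ← mul_assoc]
    rw [Matrix.trace_mul_cycle H ρSE A]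
  rw [e1]
  have htr' : ρSE.trace.re = 1 := by rw [htr]; simp
  have t1 := abs_trace_mul_le (H * A) ρSE hρ
  have t2 := abs_trace_mul_le (A * H) ρSE hρ
  have hk := opNorm_kronecker_one_le (e := Fin dE) B
  have hHn : (0 : ℝ) ≤ opNorm H := norm_nonneg _
  calc ‖(((H * A) * ρSE).trace - ((A * H) * ρSE).trace)‖
      ≤ ‖(((H * A) * ρSE).trace)‖ + ‖(((A * H) * ρSE).trace)‖ := by
        exact
          norm_sub_le (((H * A) * ρSE).trace) (((A * H) * ρSE).trace)
    _ ≤ opNorm (H * A) * ρSE.trace.re + opNorm (A * H) * ρSE.trace.re := add_le_add t1 t2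
    _ = opNorm (H * A) + opNorm (A * H) := by rw [htr']; ring
    _ ≤ opNorm H * opNorm A + opNorm A * opNorm H :=
        add_le_add (opNorm_mul_le H A) (opNorm_mul_le A H)
    _ = 2 * opNorm H * opNorm A := by ring
    _ ≤ 2 * opNorm H * opNorm B :=
        mul_le_mul_of_nonneg_left hk (by linarith)
end
end
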